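/- For every real number c with 3/7 < c ≤ 1 and every real number x ≠ 0, one has e^{2x} + (2 − 2c)·e^{−x}·cos x + c·e^{−2x} + 1 + c − 4·(cos x)² > 0. -/

import Mathlib

theorem stmt_19 (c : ℝ) (hc₁ : 3 / 7 < c) (hc₂ : c ≤ 1) (x : ℝ) (hx : x ≠ 0) :
    Real.exp (2 * x) + (2 - 2 * c) * Real.exp (-x) * Real.cos x +
      c * Real.exp (-2 * x) + 1 + c - 4 * (Real.cos x) ^ 2 > 0 := by
  set k : ℝ → ℝ := fun y =>
    Real.exp (2 * y) + (2 - 2 * c) * (Real.exp (-y) * Real.cos y) +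
      c * Real.exp (-2 * y) + (c - 3) with hkdef
  set k1 : ℝ → ℝ := fun y =>
    2 * Real.exp (2 * y) +
      (2 - 2 * c) * (-Real.exp (-y) * Real.cos y + Real.exp (-y) * (-Real.sin y)) +
      c * (-2 * Real.exp (-2 * y)) with hk1def
  set k2 : ℝ → ℝ := fun y =>
    4 * Real.exp (2 * y) + (4 - 4 * c) * (Real.exp (-y) * Real.sin y) +
      4 * c * Real.exp (-2 * y) with hk2def
  -- basic derivative facts
  have hexp2 : ∀ y : ℝ, HasDerivAt (fun y : ℝ => Real.exp (2 * y)) (2 * Real.exp (2 * y)) y := by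
    intro y
    have h0 : HasDerivAt (fun y : ℝ => 2 * y) 2 y := by
      simpa using (hasDerivAt_id y).const_mul (2 : ℝ)
    simpa [mul_comm] using h0.exp
  have hexpneg : ∀ y : ℝ, HasDerivAt (fun y : ℝ => Real.exp (-y)) (-Real.exp (-y)) y := by
    intro y
    have h0 : HasDerivAt (fun y : ℝ => -y) (-1 : ℝ) y := by
      exact (hasDerivAt_id y).neg
    simpa using h0.exp
  have hexpneg2 : ∀ y : ℝ,
      HasDerivAt (fun y : ℝ => Real.exp (-2 * y)) (-2 * Real.exp (-2 * y)) y := by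
    intro y
    have h0 : HasDerivAt (fun y : ℝ => -2 * y) (-2 : ℝ) y := by
      simpa using (hasDerivAt_id y).const_mul (-2 : ℝ)
    simpa [mul_comm] using h0.exp
  have hK : ∀ y : ℝ, HasDerivAt k (k1 y) y := by
    intro y
    have h2 : HasDerivAt (fun y : ℝ => Real.exp (-y) * Real.cos y)
        (-Real.exp (-y) * Real.cos y + Real.exp (-y) * (-Real.sin y)) y :=
      (hexpneg y).mul (Real.hasDerivAt_cos y)
    exact (((hexp2 y).add (h2.const_mul (2 - 2 * c))).add
      ((hexpneg2 y).const_mul c)).add_const (c - 3)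
  have hK1 : ∀ y : ℝ, HasDerivAt k1 (k2 y) y := by
    intro y
    have hcs : HasDerivAt (fun y : ℝ => -Real.exp (-y) * Real.cos y + Real.exp (-y) * (-Real.sin y))
        (2 * (Real.exp (-y) * Real.sin y)) y := by
      have ha : HasDerivAt (fun y : ℝ => -Real.exp (-y)) (Real.exp (-y)) y := by
        have := (hexpneg y).neg
        rw [neg_neg] at this
        exact this
      have hb : HasDerivAt (fun y : ℝ => -Real.sin y) (-Real.cos y) y := by
        exact (Real.hasDerivAt_sin y).neg
      have h1 := ha.mul (Real.hasDerivAt_cos y)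
      have h2 := (hexpneg y).mul hb
      have := h1.add h2
      refine this.congr_deriv ?_
      ring
    have h1 := ((hexp2 y).const_mul (2 : ℝ))
    have h2 := hcs.const_mul (2 - 2 * c)
    have h3 := ((hexpneg2 y).const_mul (-2 : ℝ)).const_mul c
    have := (h1.add h2).add h3
    have heq : (fun y : ℝ => 2 * Real.exp (2 * y) +
        (2 - 2 * c) * (-Real.exp (-y) * Real.cos y + Real.exp (-y) * (-Real.sin y)) +
        c * (-2 * Real.exp (-2 * y))) = k1 := by
      funext z; simp [hk1def]
    refine this.congr_deriv ?_
    simp only [hk2def]; ring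
  -- k'' = k2 is positive
  have hk2pos : ∀ y : ℝ, 0 < k2 y := by
    intro y
    set t : ℝ := Real.exp (-y) with htdef
    have ht : 0 < t := Real.exp_pos _
    have hE1 : Real.exp (2 * y) * t ^ 2 = 1 := by
      rw [pow_two, htdef, ← Real.exp_add, ← Real.exp_add,
        show 2 * y + (-y + -y) = 0 by ring, Real.exp_zero]
    have hE2 : Real.exp (-2 * y) = t ^ 2 := by
      rw [pow_two, htdef, ← Real.exp_add]
      ring_nf
    have hsin : -1 ≤ Real.sin y := Real.neg_one_le_sin y
    have hpoly : 0 ≤ 3 * t ^ 4 - 4 * t ^ 3 + 7 := by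
      nlinarith [sq_nonneg (t ^ 2 - t), mul_nonneg ht.le (sq_nonneg (t - 1)),
        sq_nonneg (t - 1)]
    have hc37 : 0 < c - 3 / 7 := by linarith
    have hmain : 0 < 4 + (4 - 4 * c) * (t ^ 3 * Real.sin y) + 4 * c * t ^ 4 := by
      have hns : 0 ≤ (4 - 4 * c) * (t ^ 3 * (Real.sin y + 1)) := by
        have h1 : (0:ℝ) ≤ 4 - 4 * c := by linarith
        have h2 : (0:ℝ) ≤ Real.sin y + 1 := by linarith
        exact mul_nonneg h1 (mul_nonneg (pow_pos ht 3).le h2)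
      nlinarith [mul_pos hc37 (pow_pos ht 3), mul_pos hc37 (pow_pos ht 4)]
    have ht2 : 0 < t ^ 2 := by positivity
    have hmul : 0 < k2 y * t ^ 2 := by
      have heq : k2 y * t ^ 2 = 4 + (4 - 4 * c) * (t ^ 3 * Real.sin y) + 4 * c * t ^ 4 := by
        simp only [hk2def]
        rw [hE2, ← htdef]
        linear_combination 4 * hE1
      rw [heq]; exact hmain
    by_contra hcon
    push_neg at hcon
    nlinarith [mul_nonneg (neg_nonneg.mpr hcon) ht2.le]
  -- hence k1 is strictly monotone, with k1 0 = 0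
  have hmono1 : StrictMono k1 :=
    strictMono_of_deriv_pos (fun y => by rw [(hK1 y).deriv]; exact hk2pos y)
  have hk10 : k1 0 = 0 := by simp [hk1def]; ring
  have hk0 : k 0 = 0 := by simp [hkdef]; ring
  have hcont : Continuous k := by
    have : Differentiable ℝ k := fun y => (hK y).differentiableAt
    exact this.continuous
  -- k x > 0 for x ≠ 0
  have hkpos : 0 < k x := by
    rcases lt_or_gt_of_ne hx with hlt | hgt
    · have hanti : StrictAntiOn k (Set.Iic 0) := by
        apply strictAntiOn_of_deriv_neg (convex_Iic 0) hcont.continuousOn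
        intro y hy
        rw [interior_Iic] at hy
        rw [(hK y).deriv, ← hk10]
        exact hmono1 hy
      have := hanti (Set.mem_Iic.mpr hlt.le) (Set.mem_Iic.mpr le_rfl) hlt
      rwa [hk0] at this
    · have hmon : StrictMonoOn k (Set.Ici 0) := by
        apply strictMonoOn_of_deriv_pos (convex_Ici 0) hcont.continuousOn
        intro y hy
        rw [interior_Ici] at hy
        rw [(hK y).deriv, ← hk10]
        exact hmono1 hy
      have := hmon (Set.mem_Ici.mpr le_rfl) (Set.mem_Ici.mpr hgt.le) hgt
      rwa [hk0] at this
  -- conclude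
  have hc2 : Real.cos x ^ 2 ≤ 1 := Real.cos_sq_le_one x
  have hkx : k x = Real.exp (2 * x) + (2 - 2 * c) * (Real.exp (-x) * Real.cos x) +
      c * Real.exp (-2 * x) + (c - 3) := rfl
  nlinarith [hkpos, hc2, hkx]
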